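/- Let X and Y be integrable real random variables. Then X ≤_cx Y if and only if E[(x − X)₊] ≤ E[(x − Y)₊] for all x ∈ ℝ and E(X) = E(Y). -/

import Mathlib

open MeasureTheory Set Filter Topology ENNReal intervalIntegral

section Aux

variable {h : ℝ → ℝ}


noncomputable def rder (h : ℝ → ℝ) (s : ℝ) : ℝ :=
  sInf ((fun t => (h t - h s) / (t - s)) '' Ioi s)


lemma slope_mono3 (hc : ConvexOn ℝ univ h) {x y z : ℝ} (hxy : x < y) (hyz : y < z) :
    (h y - h x) / (y - x) ≤ (h z - h y) / (z - y) :=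
  hc.slope_mono_adjacent (mem_univ x) (mem_univ z) hxy hyz

lemma rder_bddBelow (hc : ConvexOn ℝ univ h) (s : ℝ) :
    BddBelow ((fun t => (h t - h s) / (t - s)) '' Ioi s) := by
  refine ⟨(h s - h (s - 1)) / (s - (s - 1)), ?_⟩
  rintro r ⟨t, ht, rfl⟩
  exact slope_mono3 hc (by linarith) ht

lemma rder_le_slope (hc : ConvexOn ℝ univ h) {s t : ℝ} (hst : s < t) :
    rder h s ≤ (h t - h s) / (t - s) :=
  csInf_le (rder_bddBelow hc s) ⟨t, hst, rfl⟩

lemma slope_le_rder (hc : ConvexOn ℝ univ h) {s t : ℝ} (hst : s < t) :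
    (h t - h s) / (t - s) ≤ rder h t := by
  refine le_csInf ⟨(h (t + 1) - h t) / (t + 1 - t), ⟨t + 1, by simp, rfl⟩⟩ ?_
  rintro r ⟨u, hu, rfl⟩
  exact slope_mono3 hc hst hu

lemma rder_mono (hc : ConvexOn ℝ univ h) : Monotone (rder h) := by
  intro s t hst
  rcases eq_or_lt_of_le hst with rfl | hst
  · exact le_rfl
  · exact (rder_le_slope hc hst).trans (slope_le_rder hc hst)

lemma rder_mul_le (hc : ConvexOn ℝ univ h) {s t : ℝ} (hst : s < t) :
    rder h s * (t - s) ≤ h t - h s := by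
  have := rder_le_slope hc hst
  rw [le_div_iff₀ (by linarith)] at this
  linarith

lemma le_rder_mul (hc : ConvexOn ℝ univ h) {s t : ℝ} (hst : s < t) :
    h t - h s ≤ rder h t * (t - s) := by
  have := slope_le_rder hc hst
  rw [div_le_iff₀ (by linarith)] at this
  linarith

lemma conv_continuous (hc : ConvexOn ℝ univ h) : Continuous h := by
  have := hc.continuousOn_interior
  rw [interior_univ] at this
  exact continuousOn_univ.mp this

lemma rder_rightCont (hc : ConvexOn ℝ univ h) (s : ℝ) :
    ContinuousWithinAt (rder h) (Ici s) s := by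
  rw [ContinuousWithinAt, tendsto_order]
  constructor
  · intro b hb
    filter_upwards [self_mem_nhdsWithin] with x hx
    exact lt_of_lt_of_le hb (rder_mono hc hx)
  · intro b hb
    -- find u > s with rder h u < b
    obtain ⟨t, ht, hslope⟩ : ∃ t, s < t ∧ (h t - h s) / (t - s) < b := by
      by_contra hcon
      push_neg at hcon
      have : b ≤ rder h s := le_csInf ⟨(h (s+1) - h s)/(s+1-s), ⟨s+1, by simp, rfl⟩⟩
        (by rintro r ⟨u, hu, rfl⟩; exact hcon u hu)
      exact absurd hb (not_lt.mpr this)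
    have hcont : ContinuousAt (fun u => (h t - h u) / (t - u)) s := by
      have : ContinuousAt h s := (conv_continuous hc).continuousAt
      exact (continuousAt_const.sub this).div (continuousAt_const.sub continuousAt_id)
        (by simp; intro hts; linarith)
    have hev : ∀ᶠ u in 𝓝 s, (h t - h u) / (t - u) < b := by
      have : (fun u => (h t - h u) / (t - u)) s < b := by simpa using hslope
      exact hcont.eventually_lt continuousAt_const this
    have hne : (𝓝[>] s).NeBot := nhdsGT_neBot s
    obtain ⟨u, hu1, hu2, hu3⟩ : ∃ u, (h t - h u) / (t - u) < b ∧ s < u ∧ u < t := by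
      have := (hev.filter_mono nhdsWithin_le_nhds).and
        (Ioo_mem_nhdsGT_of_mem (Set.left_mem_Ico.mpr ht))
      obtain ⟨u, h1, h2, h3⟩ := this.exists
      exact ⟨u, h1, h2, h3⟩
    have hru : rder h u < b := lt_of_le_of_lt (rder_le_slope hc hu3) hu1
    filter_upwards [Icc_mem_nhdsGE_of_mem (Set.left_mem_Ico.mpr hu2)] with x hx
    exact lt_of_le_of_lt (rder_mono hc hx.2) hru

noncomputable def rderSF (hc : ConvexOn ℝ univ h) : StieltjesFunction ℝ :=
  ⟨rder h, rder_mono hc, rder_rightCont hc⟩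

lemma rderSF_apply (hc : ConvexOn ℝ univ h) : (rderSF hc : ℝ → ℝ) = rder h := rfl




-- per-interval estimate
lemma step_est (hc : ConvexOn ℝ univ h) {x y : ℝ} (hxy : x ≤ y) :
    |(h y - h x) - ∫ u in x..y, rder h u| ≤ (rder h y - rder h x) * (y - x) := by
  rcases eq_or_lt_of_le hxy with rfl | hxy
  · simp
  have hlow : rder h x * (y - x) ≤ ∫ u in x..y, rder h u := by
    calc rder h x * (y - x) = ∫ _ in x..y, rder h x := by
          rw [intervalIntegral.integral_const, smul_eq_mul]; ring
      _ ≤ ∫ u in x..y, rder h u := by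
          apply integral_mono_on hxy.le intervalIntegrable_const
            ((rder_mono hc).intervalIntegrable)
          intro u hu
          exact rder_mono hc hu.1
  have hhigh : (∫ u in x..y, rder h u) ≤ rder h y * (y - x) := by
    calc (∫ u in x..y, rder h u) ≤ ∫ _ in x..y, rder h y := by
          apply integral_mono_on hxy.le ((rder_mono hc).intervalIntegrable)
            intervalIntegrable_const
          intro u hu
          exact rder_mono hc hu.2
      _ = rder h y * (y - x) := by rw [intervalIntegral.integral_const, smul_eq_mul]; ring
  have h1 := rder_mul_le hc hxy
  have h2 := le_rder_mul hc hxy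
  rw [abs_le]
  constructor <;> nlinarith

lemma ftc (hc : ConvexOn ℝ univ h) {a b : ℝ} (hab : a ≤ b) :
    ∫ u in a..b, rder h u = h b - h a := by
  rcases eq_or_lt_of_le hab with rfl | hab
  · simp
  have key : ∀ n : ℕ, 0 < n →
      |(h b - h a) - ∫ u in a..b, rder h u| ≤ (rder h b - rder h a) * (b - a) / n := by
    intro n hn
    set δ := (b - a) / n with hδ
    have hδpos : 0 < δ := div_pos (by linarith) (Nat.cast_pos.mpr hn)
    set x : ℕ → ℝ := fun i => a + i * δ with hx
    have hxsucc : ∀ i : ℕ, x i ≤ x (i + 1) := by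
      intro i; simp only [hx]
      push_cast; nlinarith
    have hxn : x n = b := by
      simp only [hx, hδ]
      field_simp
      ring
    have hint : ∀ k < n, IntervalIntegrable (rder h) volume (x k) (x (k + 1)) :=
      fun k _ => (rder_mono hc).intervalIntegrable
    have hsplit : (∫ u in (x 0)..(x n), rder h u) =
        ∑ i ∈ Finset.range n, ∫ u in (x i)..(x (i+1)), rder h u :=
      (sum_integral_adjacent_intervals hint).symm
    have htel : h (x n) - h (x 0) = ∑ i ∈ Finset.range n, (h (x (i+1)) - h (x i)) :=
      (Finset.sum_range_sub (fun i => h (x i)) n).symm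
    have hx0 : x 0 = a := by simp [hx]
    calc |(h b - h a) - ∫ u in a..b, rder h u|
        = |∑ i ∈ Finset.range n, ((h (x (i+1)) - h (x i)) - ∫ u in (x i)..(x (i+1)), rder h u)| := by
          rw [Finset.sum_sub_distrib, ← htel, ← hsplit, hx0, hxn]
      _ ≤ ∑ i ∈ Finset.range n, |(h (x (i+1)) - h (x i)) - ∫ u in (x i)..(x (i+1)), rder h u| :=
          Finset.abs_sum_le_sum_abs _ _
      _ ≤ ∑ i ∈ Finset.range n, (rder h (x (i+1)) - rder h (x i)) * δ := by
          apply Finset.sum_le_sum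
          intro i _
          have := step_est hc (hxsucc i)
          have hxd : x (i+1) - x i = δ := by simp only [hx]; push_cast; ring
          rw [hxd] at this
          exact this
      _ = (∑ i ∈ Finset.range n, (rder h (x (i+1)) - rder h (x i))) * δ := by
          rw [Finset.sum_mul]
      _ = (rder h b - rder h a) * δ := by
          rw [Finset.sum_range_sub (fun i => rder h (x i)) n, hxn, hx0]
      _ = (rder h b - rder h a) * (b - a) / n := by rw [hδ]; ring
  have hlim : Tendsto (fun n : ℕ => (rder h b - rder h a) * (b - a) / n) atTop (nhds 0) :=
    tendsto_const_div_atTop_nhds_zero_nat _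
  have habs : |(h b - h a) - ∫ u in a..b, rder h u| ≤ 0 :=
    ge_of_tendsto hlim (eventually_atTop.2 ⟨1, fun n hn => key n hn⟩)
  have := abs_nonpos_iff.mp habs
  linarith




noncomputable def kfun (s t : ℝ) : ℝ≥0∞ :=
  ENNReal.ofReal (if 0 < s then max (t - s) 0 else max (s - t) 0)

lemma kfun_meas : Measurable (fun p : ℝ × ℝ => kfun p.1 p.2) := by
  apply Measurable.ennreal_ofReal
  apply Measurable.ite (measurableSet_lt measurable_const measurable_fst)
  · exact ((measurable_snd.sub measurable_fst).max measurable_const)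
  · exact ((measurable_fst.sub measurable_snd).max measurable_const)

lemma ofReal_max0 (a : ℝ) : ENNReal.ofReal (max a 0) = ENNReal.ofReal a := by
  rcases le_total a 0 with ha | ha
  · rw [max_eq_right ha, ENNReal.ofReal_zero, ENNReal.ofReal_eq_zero.mpr ha]
  · rw [max_eq_left ha]

lemma leftLim_ae (hc : ConvexOn ℝ univ h) :
    ∀ᵐ u ∂(volume : Measure ℝ), Function.leftLim (rder h) u = rder h u := by
  have hcnt : Set.Countable {u | ¬ContinuousAt (rder h) u} :=
    (rder_mono hc).countable_not_continuousAt
  have : ∀ᵐ u ∂(volume : Measure ℝ), ContinuousAt (rder h) u := by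
    rw [ae_iff]
    exact measure_mono_null (fun u hu => hu) (hcnt.measure_zero _)
  filter_upwards [this] with u hu
  exact leftLim_eq_of_tendsto
    (hu.tendsto.mono_left nhdsWithin_le_nhds)

lemma rep (hc : ConvexOn ℝ univ h) (t : ℝ) :
    ∫⁻ s, kfun s t ∂(rderSF hc).measure = ENNReal.ofReal (h t - h 0 - rder h 0 * t) := by
  set γ := (rderSF hc).measure with hγ
  rcases le_or_gt 0 t with ht | ht
  · -- case t ≥ 0
    set F : ℝ → ℝ → ℝ≥0∞ :=
      fun s u => ({p : ℝ × ℝ | 0 < p.1 ∧ p.1 < p.2 ∧ p.2 ≤ t}).indicator 1 (s, u) with hF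
    have hFmeas : Measurable (Function.uncurry F) := by
      apply Measurable.indicator measurable_one
      exact (measurableSet_lt measurable_const measurable_fst).inter
        ((measurableSet_lt measurable_fst measurable_snd).inter
          (measurableSet_le measurable_snd measurable_const))
    have step1 : ∀ s, (∫⁻ u, F s u ∂volume) = kfun s t := by
      intro s
      rcases lt_or_ge 0 s with hs | hs
      · have : F s = (Ioc s t).indicator 1 := by
          funext u
          simp only [hF, indicator, mem_setOf_eq, mem_Ioc, Pi.one_apply]
          exact if_congr (by tauto) rfl rfl
        rw [this, lintegral_indicator measurableSet_Ioc]
        simp only [Pi.one_apply, setLIntegral_one, Measure.restrict_apply MeasurableSet.univ,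
          univ_inter]
        rw [Real.volume_Ioc, kfun, if_pos hs, ofReal_max0]
      · have : F s = fun _ => 0 := by
          funext u
          simp only [hF, indicator, mem_setOf_eq]
          rw [if_neg (by rintro ⟨h1, -, -⟩; exact absurd h1 (not_lt.mpr hs))]
        rw [this, lintegral_zero, kfun, if_neg (not_lt.mpr hs)]
        rw [max_eq_right (by linarith), ENNReal.ofReal_zero]
    have step2 : ∀ u, (∫⁻ s, F s u ∂γ) = (Iic t).indicator (fun u => γ (Ioo 0 u)) u := by
      intro u
      rcases le_or_gt u t with hu | hu
      · have : (fun s => F s u) = (Ioo 0 u).indicator 1 := by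
          funext s
          simp only [hF, indicator, mem_setOf_eq, mem_Ioo, Pi.one_apply]
          exact if_congr (Iff.intro (fun x => ⟨x.1, x.2.1⟩) (fun x => ⟨x.1, x.2, hu⟩)) rfl rfl
        rw [this, lintegral_indicator measurableSet_Ioo]
        simp only [Pi.one_apply, setLIntegral_one, Measure.restrict_apply MeasurableSet.univ,
          univ_inter, indicator_of_mem (mem_Iic.mpr hu)]
      · have : (fun s => F s u) = fun _ => 0 := by
          funext s
          simp only [hF, indicator, mem_setOf_eq]
          rw [if_neg (by rintro ⟨-, -, h3⟩; exact absurd h3 (not_le.mpr hu))]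
        rw [this, lintegral_zero, indicator_of_notMem (by simpa using hu)]
    have hswap : ∫⁻ s, (∫⁻ u, F s u ∂volume) ∂γ = ∫⁻ u, (∫⁻ s, F s u ∂γ) ∂volume :=
      lintegral_lintegral_swap hFmeas.aemeasurable
    have step3 : ∫⁻ u, (Iic t).indicator (fun u => γ (Ioo 0 u)) u ∂volume
        = ∫⁻ u, (Ioc 0 t).indicator (fun u => ENNReal.ofReal (rder h u - rder h 0)) u ∂volume := by
      apply lintegral_congr_ae
      filter_upwards [leftLim_ae hc] with u hu
      rcases le_or_gt u 0 with hu0 | hu0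
      · rw [indicator_of_mem (mem_Iic.mpr (le_trans hu0 ht)),
          indicator_of_notMem (fun hm => absurd hm.1 (not_lt.mpr hu0)),
          Ioo_eq_empty (by intro hlt; linarith), measure_empty]
      · rcases le_or_gt u t with hut | hut
        · rw [indicator_of_mem (mem_Iic.mpr hut), indicator_of_mem (mem_Ioc.mpr ⟨hu0, hut⟩),
            hγ, StieltjesFunction.measure_Ioo, rderSF_apply hc, hu]
        · rw [indicator_of_notMem (by simpa using hut),
            indicator_of_notMem (fun hm => absurd hm.2 (not_le.mpr hut))]
    have step4 : ∫⁻ u, (Ioc 0 t).indicator (fun u => ENNReal.ofReal (rder h u - rder h 0)) u ∂volume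
        = ENNReal.ofReal (∫ u in Ioc 0 t, (rder h u - rder h 0) ∂volume) := by
      rw [lintegral_indicator measurableSet_Ioc]
      refine (ofReal_integral_eq_lintegral_ofReal ?_ ?_).symm
      · refine Integrable.sub ?_ ((integrableOn_const_iff).mpr (Or.inr ?_))
        · exact (((rder_mono hc).monotoneOn _).integrableOn_isCompact isCompact_Icc).mono_set
            Ioc_subset_Icc_self
        · rw [Real.volume_Ioc]; exact ENNReal.ofReal_lt_top
      · rw [EventuallyLE, ae_restrict_iff' measurableSet_Ioc]
        filter_upwards with u hu
        simp only [Pi.zero_apply, sub_nonneg]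
        exact rder_mono hc hu.1.le
    have step5 : ∫ u in Ioc 0 t, (rder h u - rder h 0) ∂volume = h t - h 0 - rder h 0 * t := by
      rw [← intervalIntegral.integral_of_le ht]
      rw [intervalIntegral.integral_sub ((rder_mono hc).intervalIntegrable)
        intervalIntegrable_const, intervalIntegral.integral_const, ftc hc ht, smul_eq_mul]
      ring
    calc ∫⁻ s, kfun s t ∂γ = ∫⁻ s, (∫⁻ u, F s u ∂volume) ∂γ := by
          apply lintegral_congr; intro s; rw [step1]
      _ = ∫⁻ u, (∫⁻ s, F s u ∂γ) ∂volume := hswap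
      _ = ENNReal.ofReal (h t - h 0 - rder h 0 * t) := by
          rw [lintegral_congr step2, step3, step4, step5]
  · -- case t < 0
    set F : ℝ → ℝ → ℝ≥0∞ :=
      fun s u => ({p : ℝ × ℝ | p.1 ≤ 0 ∧ t < p.2 ∧ p.2 ≤ p.1}).indicator 1 (s, u) with hF
    have hFmeas : Measurable (Function.uncurry F) := by
      apply Measurable.indicator measurable_one
      exact (measurableSet_le measurable_fst measurable_const).inter
        ((measurableSet_lt measurable_const measurable_snd).inter
          (measurableSet_le measurable_snd measurable_fst))
    have step1 : ∀ s, (∫⁻ u, F s u ∂volume) = kfun s t := by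
      intro s
      rcases le_or_gt s 0 with hs | hs
      · have : F s = (Ioc t s).indicator 1 := by
          funext u
          simp only [hF, indicator, mem_setOf_eq, mem_Ioc, Pi.one_apply]
          exact if_congr (by tauto) rfl rfl
        rw [this, lintegral_indicator measurableSet_Ioc]
        simp only [Pi.one_apply, setLIntegral_one, Measure.restrict_apply MeasurableSet.univ,
          univ_inter]
        rw [Real.volume_Ioc, kfun, if_neg (not_lt.mpr hs), ofReal_max0]
      · have : F s = fun _ => 0 := by
          funext u
          simp only [hF, indicator, mem_setOf_eq]
          rw [if_neg (by rintro ⟨h1, -, -⟩; exact absurd h1 (not_le.mpr hs))]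
        rw [this, lintegral_zero, kfun, if_pos hs]
        rw [max_eq_right (by linarith), ENNReal.ofReal_zero]
    have step2 : ∀ u, (∫⁻ s, F s u ∂γ) = (Ioi t).indicator (fun u => γ (Icc u 0)) u := by
      intro u
      rcases lt_or_ge t u with hu | hu
      · have : (fun s => F s u) = (Icc u 0).indicator 1 := by
          funext s
          simp only [hF, indicator, mem_setOf_eq, mem_Icc, Pi.one_apply]
          exact if_congr (Iff.intro (fun x => ⟨x.2.2, x.1⟩) (fun x => ⟨x.2, hu, x.1⟩)) rfl rfl
        rw [this, lintegral_indicator measurableSet_Icc]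
        simp only [Pi.one_apply, setLIntegral_one, Measure.restrict_apply MeasurableSet.univ,
          univ_inter, indicator_of_mem (mem_Ioi.mpr hu)]
      · have : (fun s => F s u) = fun _ => 0 := by
          funext s
          simp only [hF, indicator, mem_setOf_eq]
          rw [if_neg (by rintro ⟨-, h2, -⟩; exact absurd h2 (not_lt.mpr hu))]
        rw [this, lintegral_zero, indicator_of_notMem (by simpa using hu)]
    have hswap : ∫⁻ s, (∫⁻ u, F s u ∂volume) ∂γ = ∫⁻ u, (∫⁻ s, F s u ∂γ) ∂volume :=
      lintegral_lintegral_swap hFmeas.aemeasurable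
    have step3 : ∫⁻ u, (Ioi t).indicator (fun u => γ (Icc u 0)) u ∂volume
        = ∫⁻ u, (Ioc t 0).indicator (fun u => ENNReal.ofReal (rder h 0 - rder h u)) u ∂volume := by
      apply lintegral_congr_ae
      filter_upwards [leftLim_ae hc] with u hu
      rcases le_or_gt u t with hut | hut
      · rw [indicator_of_notMem (by simpa using hut),
          indicator_of_notMem (fun hm => absurd hm.1 (not_lt.mpr hut))]
      · rcases le_or_gt u 0 with hu0 | hu0
        · rw [indicator_of_mem (mem_Ioi.mpr hut), indicator_of_mem (mem_Ioc.mpr ⟨hut, hu0⟩),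
            hγ, StieltjesFunction.measure_Icc, rderSF_apply hc, hu]
        · rw [indicator_of_mem (mem_Ioi.mpr hut),
            indicator_of_notMem (fun hm => absurd hm.2 (not_le.mpr hu0)),
            Icc_eq_empty (by intro hle; linarith), measure_empty]
    have step4 : ∫⁻ u, (Ioc t 0).indicator (fun u => ENNReal.ofReal (rder h 0 - rder h u)) u ∂volume
        = ENNReal.ofReal (∫ u in Ioc t 0, (rder h 0 - rder h u) ∂volume) := by
      rw [lintegral_indicator measurableSet_Ioc]
      refine (ofReal_integral_eq_lintegral_ofReal ?_ ?_).symm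
      · refine Integrable.sub ((integrableOn_const_iff).mpr (Or.inr ?_)) ?_
        · rw [Real.volume_Ioc]; exact ENNReal.ofReal_lt_top
        · exact (((rder_mono hc).monotoneOn _).integrableOn_isCompact isCompact_Icc).mono_set
            Ioc_subset_Icc_self
      · rw [EventuallyLE, ae_restrict_iff' measurableSet_Ioc]
        filter_upwards with u hu
        simp only [Pi.zero_apply, sub_nonneg]
        exact rder_mono hc hu.2
    have step5 : ∫ u in Ioc t 0, (rder h 0 - rder h u) ∂volume = h t - h 0 - rder h 0 * t := by
      rw [← intervalIntegral.integral_of_le ht.le]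
      rw [intervalIntegral.integral_sub intervalIntegrable_const
        ((rder_mono hc).intervalIntegrable), intervalIntegral.integral_const, ftc hc ht.le,
        smul_eq_mul]
      ring
    calc ∫⁻ s, kfun s t ∂γ = ∫⁻ s, (∫⁻ u, F s u ∂volume) ∂γ := by
          apply lintegral_congr; intro s; rw [step1]
      _ = ∫⁻ u, (∫⁻ s, F s u ∂γ) ∂volume := hswap
      _ = ENNReal.ofReal (h t - h 0 - rder h 0 * t) := by
          rw [lintegral_congr step2, step3, step4, step5]
lemma q_nonneg {h : ℝ → ℝ} (hc : ConvexOn ℝ univ h) (t : ℝ) :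
    0 ≤ h t - h 0 - rder h 0 * t := by
  rcases lt_trichotomy t 0 with ht | rfl | ht
  · have := le_rder_mul hc ht
    nlinarith
  · simp
  · have := rder_mul_le hc ht
    nlinarith

end Aux

lemma max_sub_identity (a b : ℝ) : max (a - b) 0 = max (b - a) 0 + (a - b) := by
  rcases le_total a b with hab | hab
  · rw [max_eq_right (by linarith), max_eq_left (by linarith)]; ring
  · rw [max_eq_left (by linarith), max_eq_right (by linarith)]; ring

theorem convex_order_iff_integrated_cdf
    {Ω : Type*} [MeasurableSpace Ω] (μ : Measure Ω) [IsProbabilityMeasure μ]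
    (X Y : Ω → ℝ) (hXmeas : Measurable X) (hYmeas : Measurable Y)
    (hX : Integrable X μ) (hY : Integrable Y μ) :
    (∀ h : ℝ → ℝ, ConvexOn ℝ Set.univ h →
        Integrable (fun ω : Ω => h (X ω)) μ → Integrable (fun ω : Ω => h (Y ω)) μ →
        ∫ ω, h (X ω) ∂μ ≤ ∫ ω, h (Y ω) ∂μ)
      ↔ ((∀ x : ℝ, ∫ ω, max (x - X ω) 0 ∂μ ≤ ∫ ω, max (x - Y ω) 0 ∂μ)
          ∧ ∫ ω, X ω ∂μ = ∫ ω, Y ω ∂μ) := by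
  constructor
  · intro H
    constructor
    · intro x
      have hconv : ConvexOn ℝ Set.univ (fun t : ℝ => max (x - t) 0) := by
        refine ⟨convex_univ, ?_⟩
        intro u _ v _ a b ha hb hab
        simp only [smul_eq_mul]
        apply max_le
        · have h1 := mul_le_mul_of_nonneg_left (le_max_left (x - u) 0) ha
          have h2 := mul_le_mul_of_nonneg_left (le_max_left (x - v) 0) hb
          have hx : x - (a * u + b * v) = a * (x - u) + b * (x - v) := by
            linear_combination x * hab.symm
          linarith
        · have h1 := mul_nonneg ha (le_max_right (x - u) 0)
          have h2 := mul_nonneg hb (le_max_right (x - v) 0)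
          linarith
      exact H _ hconv ((Integrable.sub (integrable_const x) hX).pos_part)
        ((Integrable.sub (integrable_const x) hY).pos_part)
    · have h1 : ∫ ω, X ω ∂μ ≤ ∫ ω, Y ω ∂μ :=
        H (fun t => t) (convexOn_id convex_univ) hX hY
      have hneg : ConvexOn ℝ Set.univ (fun t : ℝ => -t) := by
        refine ⟨convex_univ, ?_⟩
        intro u _ v _ a b ha hb hab
        simp only [smul_eq_mul]
        nlinarith
      have h2 : ∫ ω, -(X ω) ∂μ ≤ ∫ ω, -(Y ω) ∂μ :=
        H (fun t => -t) hneg hX.neg hY.neg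
      rw [MeasureTheory.integral_neg, MeasureTheory.integral_neg] at h2
      linarith
  · rintro ⟨hcdf, hmean⟩ h hc hhX hhY
    set γ := (rderSF hc).measure with hγ
    -- key representation for any integrable random variable
    have hq : ∀ (Z : Ω → ℝ), Measurable Z → Integrable Z μ →
        Integrable (fun ω => h (Z ω)) μ →
        (∫ ω, h (Z ω) ∂μ) = h 0 + rder h 0 * (∫ ω, Z ω ∂μ) +
          (∫⁻ s, (∫⁻ ω, kfun s (Z ω) ∂μ) ∂γ).toReal ∧
        (∫⁻ s, (∫⁻ ω, kfun s (Z ω) ∂μ) ∂γ) ≠ ∞ := by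
      intro Z hZm hZint hhZ
      have hqint : Integrable (fun ω => h (Z ω) - h 0 - rder h 0 * Z ω) μ :=
        (hhZ.sub (integrable_const (h 0))).sub (hZint.const_mul (rder h 0))
      have hmeasU : AEMeasurable (Function.uncurry fun (ω : Ω) (s : ℝ) => kfun s (Z ω))
          (μ.prod γ) :=
        (kfun_meas.comp (measurable_snd.prodMk (hZm.comp measurable_fst))).aemeasurable
      have hswap : ∫⁻ ω, (∫⁻ s, kfun s (Z ω) ∂γ) ∂μ = ∫⁻ s, (∫⁻ ω, kfun s (Z ω) ∂μ) ∂γ :=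
        lintegral_lintegral_swap hmeasU
      have hA : ∫⁻ s, (∫⁻ ω, kfun s (Z ω) ∂μ) ∂γ
          = ENNReal.ofReal (∫ ω, (h (Z ω) - h 0 - rder h 0 * Z ω) ∂μ) := by
        rw [← hswap]
        have : ∀ ω, (∫⁻ s, kfun s (Z ω) ∂γ)
            = ENNReal.ofReal (h (Z ω) - h 0 - rder h 0 * Z ω) := fun ω => rep hc (Z ω)
        rw [lintegral_congr this,
          ← ofReal_integral_eq_lintegral_ofReal hqint
            (Eventually.of_forall fun ω => q_nonneg hc (Z ω))]
      refine ⟨?_, by rw [hA]; exact ENNReal.ofReal_ne_top⟩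
      have htoReal : (∫⁻ s, (∫⁻ ω, kfun s (Z ω) ∂μ) ∂γ).toReal
          = ∫ ω, (h (Z ω) - h 0 - rder h 0 * Z ω) ∂μ := by
        rw [hA, ENNReal.toReal_ofReal (integral_nonneg fun ω => q_nonneg hc (Z ω))]
      rw [htoReal]
      have hsplit : ∫ ω, h (Z ω) ∂μ
          = ∫ ω, ((h 0 + rder h 0 * Z ω) + (h (Z ω) - h 0 - rder h 0 * Z ω)) ∂μ := by
        congr 1; funext ω; ring
      have int2 : Integrable (fun _ : Ω => h 0) μ := integrable_const _
      have int3 : Integrable (fun ω => rder h 0 * Z ω) μ := hZint.const_mul _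
      have int1 : Integrable (fun ω => h 0 + rder h 0 * Z ω) μ := int2.add int3
      rw [hsplit, integral_add int1 hqint, integral_add int2 int3,
        MeasureTheory.integral_const, probReal_univ, one_smul,
        MeasureTheory.integral_const_mul]
    obtain ⟨hXeq, _⟩ := hq X hXmeas hX hhX
    obtain ⟨hYeq, hYfin⟩ := hq Y hYmeas hY hhY
    have hΦ : ∀ s, (∫⁻ ω, kfun s (X ω) ∂μ) ≤ ∫⁻ ω, kfun s (Y ω) ∂μ := by
      intro s
      rcases lt_or_ge 0 s with hs | hs
      · simp only [kfun, if_pos hs]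
        have intX : Integrable (fun ω => max (X ω - s) 0) μ :=
          (hX.sub (integrable_const s)).pos_part
        have intY : Integrable (fun ω => max (Y ω - s) 0) μ :=
          (hY.sub (integrable_const s)).pos_part
        rw [← ofReal_integral_eq_lintegral_ofReal intX
            (Eventually.of_forall fun ω => le_max_right _ _),
          ← ofReal_integral_eq_lintegral_ofReal intY
            (Eventually.of_forall fun ω => le_max_right _ _)]
        apply ENNReal.ofReal_le_ofReal
        have intX' : Integrable (fun ω => max (s - X ω) 0) μ :=
          ((integrable_const s).sub hX).pos_part
        have intY' : Integrable (fun ω => max (s - Y ω) 0) μ :=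
          ((integrable_const s).sub hY).pos_part
        have eqX : ∫ ω, max (X ω - s) 0 ∂μ
            = (∫ ω, max (s - X ω) 0 ∂μ) + ((∫ ω, X ω ∂μ) - s) := by
          have : ∫ ω, max (X ω - s) 0 ∂μ
              = ∫ ω, (max (s - X ω) 0 + (X ω - s)) ∂μ := by
            congr 1; funext ω; exact max_sub_identity _ _
          have int4 : Integrable (fun ω => X ω - s) μ := hX.sub (integrable_const s)
          rw [this, integral_add intX' int4, integral_sub hX (integrable_const s),
            MeasureTheory.integral_const, probReal_univ, one_smul]
        have eqY : ∫ ω, max (Y ω - s) 0 ∂μ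
            = (∫ ω, max (s - Y ω) 0 ∂μ) + ((∫ ω, Y ω ∂μ) - s) := by
          have : ∫ ω, max (Y ω - s) 0 ∂μ
              = ∫ ω, (max (s - Y ω) 0 + (Y ω - s)) ∂μ := by
            congr 1; funext ω; exact max_sub_identity _ _
          have int4 : Integrable (fun ω => Y ω - s) μ := hY.sub (integrable_const s)
          rw [this, integral_add intY' int4, integral_sub hY (integrable_const s),
            MeasureTheory.integral_const, probReal_univ, one_smul]
        rw [eqX, eqY, hmean]
        have := hcdf s
        linarith
      · simp only [kfun, if_neg (not_lt.mpr hs)]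
        have intX' : Integrable (fun ω => max (s - X ω) 0) μ :=
          ((integrable_const s).sub hX).pos_part
        have intY' : Integrable (fun ω => max (s - Y ω) 0) μ :=
          ((integrable_const s).sub hY).pos_part
        rw [← ofReal_integral_eq_lintegral_ofReal intX'
            (Eventually.of_forall fun ω => le_max_right _ _),
          ← ofReal_integral_eq_lintegral_ofReal intY'
            (Eventually.of_forall fun ω => le_max_right _ _)]
        exact ENNReal.ofReal_le_ofReal (hcdf s)
    have hAle : (∫⁻ s, (∫⁻ ω, kfun s (X ω) ∂μ) ∂γ) ≤ ∫⁻ s, (∫⁻ ω, kfun s (Y ω) ∂μ) ∂γ :=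
      lintegral_mono hΦ
    have htr := ENNReal.toReal_mono hYfin hAle
    rw [hXeq, hYeq, hmean]
    linarith
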